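/- Let the nonlinear system x_{k+1} = f(x_k, u_k), y_k = g(x_k, u_k) admit a Koopman linear embedding (Φ, A, B, C, D) of dimension n_z, and let L > n_z. Let (u, y) ∈ ℬ₂|_L be a length-L trajectory of the Koopman linear embedding. Then (u, y) ∈ ℬ₁|_L (i.e., (u,y) is a trajectory of the nonlinear system) if and only if its leading length-n_z subsequence (u_{0:n_z−1}, y_{0:n_z−1}) is a length-n_z trajectory of the nonlinear system, i.e., (u_{0:n_z−1}, y_{0:n_z−1}) ∈ ℬ₁|_{n_z}. -/

import Mathlib

/-!
STATEMENT 1: Let the nonlinear system admit a Koopman linear embedding (Φ, A, B, C, D)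
of dimension n_z and let L > n_z. If (u, y) ∈ ℬ₂|_L (a trajectory of the Koopman linear
embedding), then (u, y) ∈ ℬ₁|_L (a trajectory of the nonlinear system) if and only if its
leading length-n_z subsequence (u_{0:n_z-1}, y_{0:n_z-1}) is a length-n_z trajectory of
the nonlinear system.
-/

private lemma sum_mulVec_aux {ι : Type*} [DecidableEq ι] (s : Finset ι) {nz p : ℕ}
    (M : ι → Matrix (Fin p) (Fin nz) ℝ) (v : Fin nz → ℝ) :
    (∑ i ∈ s, M i).mulVec v = ∑ i ∈ s, (M i).mulVec v := by
  induction s using Finset.induction_on with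
  | empty => simp [Matrix.zero_mulVec]
  | insert _ _ h ih => simp [Finset.sum_insert h, Matrix.add_mulVec, ih]

private lemma mulVec_sum_aux {ι : Type*} [DecidableEq ι] (s : Finset ι) {nz p : ℕ}
    (C : Matrix (Fin p) (Fin nz) ℝ) (v : ι → Fin nz → ℝ) :
    C.mulVec (∑ i ∈ s, v i) = ∑ i ∈ s, C.mulVec (v i) := by
  induction s using Finset.induction_on with
  | empty => simp [Matrix.mulVec_zero]
  | insert _ _ h ih => simp [Finset.sum_insert h, Matrix.mulVec_add, ih]

private lemma obs_key {nz p : ℕ} (A : Matrix (Fin nz) (Fin nz) ℝ)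
    (C : Matrix (Fin p) (Fin nz) ℝ) (w0 : Fin nz → ℝ)
    (h : ∀ i < nz, C.mulVec ((A ^ i).mulVec w0) = 0) :
    ∀ k, C.mulVec ((A ^ k).mulVec w0) = 0 := by
  have hdeg : A.charpoly.natDegree = nz := by
    rw [Matrix.charpoly_natDegree_eq_dim, Fintype.card_fin]
  have hCH : (Polynomial.aeval A) A.charpoly = 0 := A.aeval_self_charpoly
  have hsum : A ^ nz = ∑ i ∈ Finset.range nz, (-(A.charpoly.coeff i)) • A ^ i := by
    have h1 := Polynomial.aeval_eq_sum_range (p := A.charpoly) A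
    rw [hCH, hdeg, Finset.sum_range_succ] at h1
    have hc : A.charpoly.coeff nz = 1 := by
      have := A.charpoly_monic.coeff_natDegree
      rwa [hdeg] at this
    rw [hc, one_smul] at h1
    have h2 : A ^ nz = -(∑ i ∈ Finset.range nz, A.charpoly.coeff i • A ^ i) := by
      exact eq_neg_of_add_eq_zero_right h1.symm
    rw [h2, ← Finset.sum_neg_distrib]
    exact Finset.sum_congr rfl fun i _ => (neg_smul _ _).symm
  intro k
  induction k using Nat.strong_induction_on with
  | _ k ih =>
    rcases lt_or_ge k nz with hk | hk
    · exact h k hk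
    · have hpow : A ^ k = ∑ i ∈ Finset.range nz,
          (-(A.charpoly.coeff i)) • A ^ (k - nz + i) := by
        have hk' : k - nz + nz = k := Nat.sub_add_cancel hk
        calc A ^ k = A ^ (k - nz) * A ^ nz := by rw [← pow_add, hk']
          _ = ∑ i ∈ Finset.range nz, (-(A.charpoly.coeff i)) • A ^ (k - nz + i) := by
              rw [hsum, Finset.mul_sum]
              exact Finset.sum_congr rfl fun i _ => by
                rw [mul_smul_comm, ← pow_add]
      rw [hpow, sum_mulVec_aux, mulVec_sum_aux]
      refine Finset.sum_eq_zero fun i hi => ?_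
      rw [Matrix.smul_mulVec, Matrix.mulVec_smul,
        ih (k - nz + i) (by have := Finset.mem_range.mp hi; omega)]
      simp

theorem koopman_traj_mem_nonlinear_iff_leading
    (n m p nz L : ℕ) (hL : nz < L)
    (f : (Fin n → ℝ) → (Fin m → ℝ) → (Fin n → ℝ))
    (g : (Fin n → ℝ) → (Fin m → ℝ) → (Fin p → ℝ))
    (Φ : (Fin n → ℝ) → (Fin nz → ℝ))
    (A : Matrix (Fin nz) (Fin nz) ℝ) (B : Matrix (Fin nz) (Fin m) ℝ)
    (C : Matrix (Fin p) (Fin nz) ℝ) (D : Matrix (Fin p) (Fin m) ℝ)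
    -- (Φ, A, B, C, D) is a Koopman linear embedding of the nonlinear system (f, g):
    (hdyn : ∀ x u, Φ (f x u) = A.mulVec (Φ x) + B.mulVec u)
    (hout : ∀ x u, g x u = C.mulVec (Φ x) + D.mulVec u)
    (u : ℕ → Fin m → ℝ) (y : ℕ → Fin p → ℝ)
    -- (u, y) ∈ ℬ₂|_L :
    (hB2 : ∃ z : ℕ → (Fin nz → ℝ),
      ∀ k < L, z (k + 1) = A.mulVec (z k) + B.mulVec (u k) ∧
        y k = C.mulVec (z k) + D.mulVec (u k)) :
    -- (u, y) ∈ ℬ₁|_L ↔ (u_{0:nz-1}, y_{0:nz-1}) ∈ ℬ₁|_{nz} :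
    (∃ x : ℕ → (Fin n → ℝ),
      ∀ k < L, x (k + 1) = f (x k) (u k) ∧ y k = g (x k) (u k)) ↔
    (∃ x : ℕ → (Fin n → ℝ),
      ∀ k < nz, x (k + 1) = f (x k) (u k) ∧ y k = g (x k) (u k)) := by
  constructor
  · rintro ⟨x, hx⟩
    exact ⟨x, fun k hk => hx k (hk.trans hL)⟩
  · rintro ⟨x, hx⟩
    obtain ⟨z, hz⟩ := hB2
    -- extend the state trajectory by the dynamics
    set x' : ℕ → Fin n → ℝ := fun k => Nat.rec (x 0) (fun j xj => f xj (u j)) k with hx'def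
    have hx'succ : ∀ k, x' (k + 1) = f (x' k) (u k) := fun k => rfl
    have hx'eq : ∀ k ≤ nz, x' k = x k := by
      intro k hk
      induction k with
      | zero => rfl
      | succ j ih =>
        have hj : j < nz := hk
        rw [hx'succ, ih hj.le, (hx j hj).1]
    -- discrepancy between lifted state and Koopman state
    set w : ℕ → Fin nz → ℝ := fun k => Φ (x' k) - z k with hwdef
    have hwsucc : ∀ k < L, w (k + 1) = A.mulVec (w k) := by
      intro k hk
      simp only [hwdef]
      rw [hx'succ, hdyn, (hz k hk).1, Matrix.mulVec_sub]
      abel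
    have hwk : ∀ k ≤ L, w k = (A ^ k).mulVec (w 0) := by
      intro k hk
      induction k with
      | zero => simp
      | succ j ih =>
        rw [hwsucc j (lt_of_lt_of_le (Nat.lt_succ_self j) hk |>.trans_le le_rfl),
          ih (Nat.le_of_succ_le hk), Matrix.mulVec_mulVec, ← pow_succ']
    -- the output discrepancy vanishes on the leading window
    have hlead : ∀ i < nz, C.mulVec ((A ^ i).mulVec (w 0)) = 0 := by
      intro i hi
      rw [← hwk i (le_of_lt (hi.trans hL))]
      have h1 : y i = C.mulVec (z i) + D.mulVec (u i) := (hz i (hi.trans hL)).2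
      have h2 : y i = C.mulVec (Φ (x' i)) + D.mulVec (u i) := by
        rw [(hx i hi).2, hout, hx'eq i hi.le]
      have h3 : C.mulVec (Φ (x' i)) = C.mulVec (z i) := by
        have := h1.symm.trans h2
        exact (add_right_cancel this).symm
      simp only [hwdef]
      rw [Matrix.mulVec_sub, h3, sub_self]
    have hall : ∀ k ≤ L, C.mulVec (w k) = 0 := by
      intro k hk
      rw [hwk k hk]
      exact obs_key A C (w 0) hlead k
    refine ⟨x', fun k hk => ⟨hx'succ k, ?_⟩⟩
    have hy : y k = C.mulVec (z k) + D.mulVec (u k) := (hz k hk).2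
    rw [hout]
    have hΦ : Φ (x' k) = z k + w k := by simp [hwdef]
    rw [hΦ, Matrix.mulVec_add, hall k hk.le, add_zero, ← hy]
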